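/- For a prime p, non-negative integers n ≥ j with p ∣ C(n,j), class index i := i(n,j), and b := n+1 with base-p digits b_σ, setting T(i,b) := Σ_{σ≥i} b_σ p^σ, we have C(m, j) ≡ 0 mod p for all m with T(i,b) ≤ m ≤ n, while C(T(i,b) − 1, j) is not divisible by p. -/

import Mathlib

/-- The σ-th digit of `x` in base `p`. -/
def digit (p x σ : ℕ) : ℕ := x / p ^ σ % p

lemma digit_lt {p : ℕ} (hp : 0 < p) (x σ : ℕ) : digit p x σ < p := Nat.mod_lt _ hp

lemma digit_zero (p x : ℕ) : digit p x 0 = x % p := by simp [digit]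

lemma digit_div (p x R σ : ℕ) : digit p (x / p ^ R) σ = digit p x (R + σ) := by
  unfold digit
  rw [Nat.div_div_eq_div_mul, ← pow_add]

lemma digit_div_one (p x σ : ℕ) : digit p (x / p) σ = digit p x (σ + 1) := by
  have := digit_div p x 1 σ
  simpa [Nat.add_comm] using this

lemma mod_pow_succ' (p x σ : ℕ) : x % p ^ (σ + 1) = digit p x σ * p ^ σ + x % p ^ σ := by
  rw [Nat.mod_pow_succ]; unfold digit; ring

/-- digit sum representation of `x % p^k`. -/
lemma mod_pow_eq_sum (p x k : ℕ) : x % p ^ k = ∑ σ ∈ Finset.range k, digit p x σ * p ^ σ := by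
  induction k with
  | zero => simp [Nat.mod_one]
  | succ k ih => rw [Finset.sum_range_succ, mod_pow_succ', ih]; ring

lemma digit_pos_le {p x σ : ℕ} (h : 0 < digit p x σ) : p ^ σ ≤ x := by
  by_contra hc
  push_neg at hc
  simp [digit, Nat.div_eq_of_lt hc] at h

lemma digit_log_pos {p x : ℕ} (hp : 1 < p) (hx : x ≠ 0) : 0 < digit p x (Nat.log p x) := by
  have h1 := Nat.pow_log_le_self p hx
  have h2 := Nat.lt_pow_succ_log_self hp x
  unfold digit
  have hd1 : 1 ≤ x / p ^ Nat.log p x := (Nat.one_le_div_iff (by positivity)).mpr h1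
  have hd2 : x / p ^ Nat.log p x < p := by
    rw [Nat.div_lt_iff_lt_mul (by positivity)]
    calc x < p ^ (Nat.log p x).succ := h2
      _ = p * p ^ Nat.log p x := by rw [pow_succ]; ring
  rw [Nat.mod_eq_of_lt hd2]
  exact hd1

/-- digitwise `≤` implies `≤`. -/
lemma le_of_digit_le {p x y : ℕ} (hp : 1 < p) (h : ∀ σ, digit p x σ ≤ digit p y σ) : x ≤ y := by
  have hx : x < p ^ x := lt_of_lt_of_le (Nat.lt_two_pow_self (n := x)) (Nat.pow_le_pow_left hp x)
  calc x = x % p ^ x := (Nat.mod_eq_of_lt hx).symm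
    _ = ∑ σ ∈ Finset.range x, digit p x σ * p ^ σ := mod_pow_eq_sum p x x
    _ ≤ ∑ σ ∈ Finset.range x, digit p y σ * p ^ σ := by
        exact Finset.sum_le_sum fun σ _ => Nat.mul_le_mul_right _ (h σ)
    _ = y % p ^ x := (mod_pow_eq_sum p y x).symm
    _ ≤ y := Nat.mod_le y _

lemma not_dvd_choose_small {p a b : ℕ} (hp : p.Prime) (ha : a < p) (hb : b ≤ a) :
    ¬ p ∣ Nat.choose a b := by
  intro hdvd
  have h1 : Nat.choose a b ∣ Nat.factorial a :=
    ⟨Nat.factorial b * Nat.factorial (a - b), by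
      rw [← Nat.choose_mul_factorial_mul_factorial hb]; ring⟩
  have h2 : p ∣ Nat.factorial a := hdvd.trans h1
  have := (hp.dvd_factorial).mp h2
  omega

/-- Key criterion: `p ∤ C(m,j)` iff digitwise `j ≤ m`. -/
lemma not_dvd_choose_iff {p : ℕ} (hp : p.Prime) (m j : ℕ) :
    ¬ p ∣ Nat.choose m j ↔ ∀ σ, digit p j σ ≤ digit p m σ := by
  haveI : Fact p.Prime := ⟨hp⟩
  induction m using Nat.strong_induction_on generalizing j with
  | _ m ih =>
  rcases Nat.eq_zero_or_pos m with hm | hm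
  · subst hm
    rcases Nat.eq_zero_or_pos j with hj | hj
    · subst hj; simp [Nat.dvd_one, hp.ne_one]
    · constructor
      · intro h
        exact absurd (dvd_zero p) (by simpa [Nat.choose_eq_zero_of_lt hj] using h)
      · intro h
        have h0 := h (Nat.log p j)
        have h1 := digit_log_pos hp.one_lt (by omega : j ≠ 0)
        simp [digit] at h0 h1
        omega
  · have hmp : m / p < m := Nat.div_lt_self hm hp.one_lt
    have hmod : Nat.choose m j ≡
        Nat.choose (m % p) (j % p) * Nat.choose (m / p) (j / p) [MOD p] :=
      Choose.choose_modEq_choose_mod_mul_choose_div_nat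
    have hdvd_iff : p ∣ Nat.choose m j ↔
        p ∣ Nat.choose (m % p) (j % p) * Nat.choose (m / p) (j / p) := by
      rw [← Nat.modEq_zero_iff_dvd, ← Nat.modEq_zero_iff_dvd]
      exact ⟨hmod.symm.trans, hmod.trans⟩
    rw [hdvd_iff, hp.dvd_mul, not_or]
    have hA : ¬ p ∣ Nat.choose (m % p) (j % p) ↔ j % p ≤ m % p := by
      constructor
      · intro h; by_contra hc; push_neg at hc
        exact h (by simp [Nat.choose_eq_zero_of_lt hc])
      · intro h; exact not_dvd_choose_small hp (Nat.mod_lt _ hp.pos) h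
    rw [hA]
    have hB := ih (m / p) hmp (j / p)
    constructor
    · rintro ⟨h0, hs⟩ σ
      have hs' := hB.mp hs
      cases σ with
      | zero => simpa [digit_zero] using h0
      | succ σ => rw [← digit_div_one, ← digit_div_one]; exact hs' σ
    · intro h
      refine ⟨by simpa [digit_zero] using h 0, hB.mpr fun σ => ?_⟩
      rw [digit_div_one, digit_div_one]; exact h (σ + 1)

lemma mod_add_pow_lt {p n R : ℕ} (hp : 1 < p) (hR : digit p n R + 2 ≤ p) :
    ∀ k, R < k → n % p ^ k + p ^ R < p ^ k := by
  intro k hk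
  induction k with
  | zero => omega
  | succ k ih =>
    have hpk : p ^ (k + 1) = p * p ^ k := by rw [pow_succ]; ring
    rw [mod_pow_succ']
    rcases Nat.lt_or_ge R k with h | h
    · have h1 : n % p ^ k + p ^ R < p ^ k := ih h
      have h2 : (digit p n k + 1) * p ^ k ≤ p * p ^ k :=
        Nat.mul_le_mul_right _ (digit_lt (by omega) n k)
      calc digit p n k * p ^ k + n % p ^ k + p ^ R
          < digit p n k * p ^ k + p ^ k := by omega
        _ = (digit p n k + 1) * p ^ k := by ring
        _ ≤ p * p ^ k := h2
        _ = p ^ (k + 1) := hpk.symm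
    · have hRk : R = k := by omega
      subst hRk
      have h1 : n % p ^ R < p ^ R := Nat.mod_lt _ (by positivity)
      have h2 : (digit p n R + 2) * p ^ R ≤ p * p ^ R := Nat.mul_le_mul_right _ hR
      calc digit p n R * p ^ R + n % p ^ R + p ^ R
          < (digit p n R + 2) * p ^ R := by have : (digit p n R + 2) * p ^ R = digit p n R * p ^ R + p ^ R + p ^ R := by ring
                                            omega
        _ ≤ p * p ^ R := h2
        _ = p ^ (R + 1) := hpk.symm

lemma digit_add_mul_pow_high {p : ℕ} (hp : 0 < p) {r k : ℕ} (hr : r < p ^ k) (c τ : ℕ) :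
    digit p (c * p ^ k + r) (k + τ) = digit p c τ := by
  have h1 : (c * p ^ k + r) / p ^ k = c := by
    rw [show c * p ^ k + r = r + p ^ k * c by ring,
      Nat.add_mul_div_left _ _ (show 0 < p ^ k by positivity), Nat.div_eq_of_lt hr, Nat.zero_add]
  unfold digit
  rw [pow_add, ← Nat.div_div_eq_div_mul, h1]

lemma digit_add_mul_pow_low {p : ℕ} (hp : 0 < p) {r k : ℕ} (hr : r < p ^ k) (c : ℕ) {σ : ℕ}
    (hσ : σ < k) : digit p (c * p ^ k + r) σ = digit p r σ := by
  have hkσ : p ^ k = p ^ σ * p ^ (k - σ) := by rw [← pow_add]; congr 1; omega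
  have h1 : (c * p ^ k + r) / p ^ σ = r / p ^ σ + p ^ (k - σ) * c := by
    rw [hkσ]
    rw [show c * (p ^ σ * p ^ (k - σ)) + r = r + p ^ σ * (p ^ (k - σ) * c) by ring]
    rw [Nat.add_mul_div_left _ _ (by positivity)]
  unfold digit
  rw [h1]
  have h2 : p ^ (k - σ) * c = p * (p ^ (k - σ - 1) * c) := by
    rw [← mul_assoc, ← pow_succ']
    congr 2
    omega
  rw [h2, Nat.add_mul_mod_self_left]

lemma digit_pow_sub_one {p : ℕ} (hp : 1 < p) {k σ : ℕ} (hσ : σ < k) :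
    digit p (p ^ k - 1) σ = p - 1 := by
  have hσk : p ^ k = p ^ σ * p ^ (k - σ) := by rw [← pow_add]; congr 1; omega
  have hp1 : 1 ≤ p ^ σ := Nat.one_le_pow _ _ (by omega)
  have hp2 : 1 ≤ p ^ (k - σ) := Nat.one_le_pow _ _ (by omega)
  have h1 : p ^ k - 1 = (p ^ (k - σ) - 1) * p ^ σ + (p ^ σ - 1) := by
    have : (p ^ (k - σ) - 1) * p ^ σ = p ^ k - p ^ σ := by
      rw [Nat.sub_mul, one_mul, mul_comm, ← hσk]
    rw [this]
    have : p ^ σ ≤ p ^ k := Nat.pow_le_pow_right (by omega) (by omega)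
    omega
  have h2 : (p ^ k - 1) / p ^ σ = p ^ (k - σ) - 1 := by
    rw [h1, show (p ^ (k - σ) - 1) * p ^ σ + (p ^ σ - 1) = (p ^ σ - 1) + p ^ σ * (p ^ (k - σ) - 1) by ring,
      Nat.add_mul_div_left _ _ (show 0 < p ^ σ by positivity), Nat.div_eq_of_lt (by omega)]
    omega
  unfold digit
  rw [h2]
  have h3 : p ^ (k - σ) - 1 = (p - 1) + p * (p ^ (k - σ - 1) - 1) := by
    have he : p ^ (k - σ) = p * p ^ (k - σ - 1) := by
      rw [← pow_succ']; congr 1; omega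
    have h4 : 1 ≤ p ^ (k - σ - 1) := Nat.one_le_pow _ _ (by omega)
    have h5 : p * 1 ≤ p * p ^ (k - σ - 1) := Nat.mul_le_mul_left _ h4
    have h6 : p * (p ^ (k - σ - 1) - 1) = p * p ^ (k - σ - 1) - p := by
      rw [Nat.mul_sub, Nat.mul_one]
    omega
  rw [h3, Nat.add_mul_mod_self_left, Nat.mod_eq_of_lt (by omega)]

/-- For a pair `(n,j)` with `p ∣ C(n,j)`, the class index `i` of `(n,j)`:
with `L := max {σ | j_σ > n_σ}`, it is `i := min {σ | σ > L ∧ j_σ < n_σ}`. -/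
noncomputable def classIdx (p n j : ℕ) : ℕ :=
  sInf {σ : ℕ | σ > sSup {τ : ℕ | digit p n τ < digit p j τ} ∧ digit p j σ < digit p n σ}

/-- The top line function `T(R,b) = Σ_{σ≥R} b_σ p^σ`. (Digits of `b` with index
`σ > b` vanish, so the sum over `R ≤ σ < b+1` is the full infinite sum.) -/
def topLine (p b R : ℕ) : ℕ := ∑ σ ∈ Finset.Ico R (b + 1), digit p b σ * p ^ σ

/-- With `i` the class index of `(n,j)` and `b = n+1`: `C(m,j) ≡ 0 mod p` for all
`m` with `T(i,b) ≤ m ≤ n`, while `C(T(i,b) − 1, j)` is not divisible by `p`. -/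
theorem topLine_property (p : ℕ) (hp : p.Prime) (n j : ℕ) (hjn : j ≤ n)
    (hdvd : p ∣ Nat.choose n j) :
    (∀ m : ℕ, topLine p (n + 1) (classIdx p n j) ≤ m → m ≤ n → p ∣ Nat.choose m j) ∧
      ¬ p ∣ Nat.choose (topLine p (n + 1) (classIdx p n j) - 1) j := by
  have hp1 := hp.one_lt
  have hppos := hp.pos
  set L := sSup {τ : ℕ | digit p n τ < digit p j τ} with hLdef
  -- the set S1 is nonempty and bounded
  have hS1ne : {τ : ℕ | digit p n τ < digit p j τ}.Nonempty := by
    by_contra hc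
    rw [Set.not_nonempty_iff_eq_empty] at hc
    refine (not_dvd_choose_iff hp n j).mpr (fun σ => ?_) hdvd
    by_contra h2
    push_neg at h2
    have hmem : σ ∈ {τ : ℕ | digit p n τ < digit p j τ} := h2
    rw [hc] at hmem
    exact hmem
  have hS1bdd : BddAbove {τ : ℕ | digit p n τ < digit p j τ} := by
    refine ⟨j, fun τ hτ => ?_⟩
    have h1 : 0 < digit p j τ := by simpa using Nat.lt_of_le_of_lt (Nat.zero_le _) hτ
    have h2 : p ^ τ ≤ j := digit_pos_le h1
    have h3 : τ < p ^ τ := Nat.lt_pow_self (n := τ) hp1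
    omega
  have hL : digit p n L < digit p j L := Nat.sSup_mem hS1ne hS1bdd
  have hgtL : ∀ σ, L < σ → digit p j σ ≤ digit p n σ := by
    intro σ hσ
    by_contra h
    push_neg at h
    exact absurd (le_csSup hS1bdd h) (by omega)
  -- S2 nonempty
  have hS2ne : ∃ σ, L < σ ∧ digit p j σ < digit p n σ := by
    by_contra hc
    push_neg at hc
    have heq : ∀ σ, L < σ → digit p j σ = digit p n σ :=
      fun σ hσ => le_antisymm (hgtL σ hσ) (hc σ hσ)
    -- then j > n, contradiction
    have hdivEq : j / p ^ (L + 1) = n / p ^ (L + 1) := by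
      apply le_antisymm <;>
      · apply le_of_digit_le hp1
        intro τ
        rw [digit_div, digit_div, heq _ (by omega)]
    have hjL := mod_pow_succ' p j L
    have hnL := mod_pow_succ' p n L
    have hjmod : j % p ^ L ≤ p ^ L - 1 := by
      have := Nat.mod_lt j (show 0 < p ^ L by positivity); omega
    have hnmod : n % p ^ L < p ^ L := Nat.mod_lt n (by positivity)
    have hmodlt : n % p ^ (L + 1) < j % p ^ (L + 1) := by
      have h1 : (digit p n L + 1) * p ^ L ≤ digit p j L * p ^ L :=
        Nat.mul_le_mul_right _ (by omega)
      calc n % p ^ (L + 1) = digit p n L * p ^ L + n % p ^ L := hnL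
        _ < digit p n L * p ^ L + p ^ L := by omega
        _ = (digit p n L + 1) * p ^ L := by ring
        _ ≤ digit p j L * p ^ L := h1
        _ ≤ digit p j L * p ^ L + j % p ^ L := Nat.le_add_right _ _
        _ = j % p ^ (L + 1) := hjL.symm
    have hd1 := Nat.div_add_mod j (p ^ (L + 1))
    have hd2 := Nat.div_add_mod n (p ^ (L + 1))
    rw [hdivEq] at hd1
    have hq' : p ^ (L + 1) * (n / p ^ (L + 1)) + n % p ^ (L + 1)
        < p ^ (L + 1) * (n / p ^ (L + 1)) + j % p ^ (L + 1) := Nat.add_lt_add_left hmodlt _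
    rw [hd2, hd1] at hq'
    omega
  have himem : L < classIdx p n j ∧ digit p j (classIdx p n j) < digit p n (classIdx p n j) :=
    Nat.sInf_mem hS2ne
  set i := classIdx p n j with hidef
  obtain ⟨hLi, hdi⟩ := himem
  have himin : ∀ σ, L < σ → σ < i → digit p j σ = digit p n σ := by
    intro σ h1 h2
    have := Nat.notMem_of_lt_sInf (s := {σ : ℕ | L < σ ∧ digit p j σ < digit p n σ}) h2
    have h3 : ¬ (L < σ ∧ digit p j σ < digit p n σ) := this
    have := hgtL σ h1
    omega
  have hni1 : 1 ≤ digit p n i := by omega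
  have hpin : p ^ i ≤ n := digit_pos_le (by omega)
  have hiln : i ≤ n := le_trans (le_of_lt (Nat.lt_pow_self (n := i) hp1)) hpin
  have hpipos : 0 < p ^ i := by positivity
  have hqpos : 0 < n / p ^ i :=
    Nat.pos_of_ne_zero (fun h0 => by simp [digit, h0] at hni1)
  have hnL2 : digit p n L + 2 ≤ p := by
    have := digit_lt hppos j L; omega
  have hpLpos : 0 < p ^ L := by positivity
  have hmodi : n % p ^ i + p ^ L < p ^ i := mod_add_pow_lt hp1 hnL2 i hLi
  have hrep : n + 1 = (n % p ^ i + 1) + p ^ i * (n / p ^ i) := by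
    have := Nat.div_add_mod n (p ^ i); omega
  have hmodsucc : (n + 1) % p ^ i = n % p ^ i + 1 := by
    rw [hrep, Nat.add_mul_mod_self_left, Nat.mod_eq_of_lt (by omega)]
  have hT : topLine p (n + 1) i = p ^ i * (n / p ^ i) := by
    unfold topLine
    have hc := Finset.sum_Ico_consecutive (fun σ => digit p (n + 1) σ * p ^ σ)
      (Nat.zero_le i) (show i ≤ n + 1 + 1 by omega)
    have hs1 : ∑ σ ∈ Finset.Ico 0 (n + 1 + 1), digit p (n + 1) σ * p ^ σ = n + 1 := by
      rw [← Finset.range_eq_Ico, ← mod_pow_eq_sum]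
      apply Nat.mod_eq_of_lt
      calc n + 1 < 2 ^ (n + 1) := Nat.lt_two_pow_self (n := n + 1)
        _ ≤ 2 ^ (n + 1 + 1) := Nat.pow_le_pow_right (by omega) (by omega)
        _ ≤ p ^ (n + 1 + 1) := Nat.pow_le_pow_left hp.two_le _
    have hs2 : ∑ σ ∈ Finset.Ico 0 i, digit p (n + 1) σ * p ^ σ = n % p ^ i + 1 := by
      rw [← Finset.range_eq_Ico, ← mod_pow_eq_sum, hmodsucc]
    rw [hs1, hs2] at hc
    have hdm := Nat.div_add_mod n (p ^ i)
    linarith [hc, hdm]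
  constructor
  · intro m hTm hmn
    rw [hT] at hTm
    by_contra hnd
    have hdig : ∀ σ, digit p j σ ≤ digit p m σ := (not_dvd_choose_iff hp m j).mp hnd
    have hmdiv : m / p ^ i = n / p ^ i := by
      refine le_antisymm (Nat.div_le_div_right hmn) ?_
      rw [Nat.le_div_iff_mul_le hpipos]
      calc n / p ^ i * p ^ i = p ^ i * (n / p ^ i) := by ring
        _ ≤ m := hTm
    have hdigh : ∀ τ, digit p m (i + τ) = digit p n (i + τ) := by
      intro τ; rw [← digit_div, ← digit_div, hmdiv]
    have hmge : n / p ^ (L + 1) ≤ m / p ^ (L + 1) := by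
      apply le_of_digit_le hp1
      intro τ
      rw [digit_div, digit_div]
      rcases Nat.lt_or_ge (L + 1 + τ) i with h | h
      · rw [← himin _ (by omega) h]; exact hdig _
      · have he : i + (L + 1 + τ - i) = L + 1 + τ := by omega
        rw [← he, hdigh]
    have hd1 := Nat.div_add_mod m (p ^ (L + 1))
    have hd2 := Nat.div_add_mod n (p ^ (L + 1))
    have hmul : p ^ (L + 1) * (n / p ^ (L + 1)) ≤ p ^ (L + 1) * (m / p ^ (L + 1)) :=
      Nat.mul_le_mul_left _ hmge
    have hmodle : m % p ^ (L + 1) ≤ n % p ^ (L + 1) := by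
      linarith [hd1, hd2, hmul, hmn]
    have hmL := mod_pow_succ' p m L
    have hnLL := mod_pow_succ' p n L
    have hlow : digit p m L * p ^ L < (digit p n L + 1) * p ^ L := by
      have h2 : (digit p n L + 1) * p ^ L = digit p n L * p ^ L + p ^ L := by ring
      have h3 : n % p ^ L < p ^ L := Nat.mod_lt _ hpLpos
      linarith [hmL, hnLL, hmodle, h2, h3, Nat.zero_le (m % p ^ L)]
    have hfin : digit p m L < digit p n L + 1 := Nat.lt_of_mul_lt_mul_right hlow
    have := hdig L
    omega
  · rw [hT]
    obtain ⟨q', hq'⟩ : ∃ q', n / p ^ i = q' + 1 := ⟨n / p ^ i - 1, by omega⟩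
    have hpi1 : 1 ≤ p ^ i := hpipos
    have hdec : p ^ i * (n / p ^ i) - 1 = q' * p ^ i + (p ^ i - 1) := by
      rw [hq', show p ^ i * (q' + 1) = q' * p ^ i + p ^ i by ring, Nat.add_sub_assoc hpi1]
    rw [hdec]
    refine (not_dvd_choose_iff hp _ j).mpr fun σ => ?_
    have hpilt : p ^ i - 1 < p ^ i := by omega
    have hqm : (n / p ^ i) % p = digit p n i := by
      rw [← digit_zero, digit_div, Nat.add_zero]
    have hqmlt : (n / p ^ i) % p < p := Nat.mod_lt _ hppos
    have hdq := Nat.div_add_mod (n / p ^ i) p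
    have h1M : 1 ≤ (n / p ^ i) % p := by rw [hqm]; exact hni1
    have hq'rep : q' = ((n / p ^ i) % p - 1) + p * (n / p ^ i / p) := by
      revert hdq hq' h1M
      generalize (n / p ^ i) % p = M
      generalize p * (n / p ^ i / p) = C
      generalize n / p ^ i = Q
      intro hdq hq' h1M
      omega
    rcases Nat.lt_trichotomy σ i with h | rfl | h
    · rw [digit_add_mul_pow_low hppos hpilt q' h, digit_pow_sub_one hp1 h]
      have := digit_lt hppos j σ; omega
    · have h0 : digit p (q' * p ^ i + (p ^ i - 1)) (i + 0) = digit p q' 0 :=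
        digit_add_mul_pow_high hppos hpilt q' 0
      rw [Nat.add_zero] at h0
      rw [h0, digit_zero, hq'rep, Nat.add_mul_mod_self_left,
        Nat.mod_eq_of_lt (by omega)]
      omega
    · have he : i + (σ - i) = σ := by omega
      have h0 : digit p (q' * p ^ i + (p ^ i - 1)) (i + (σ - i)) = digit p q' (σ - i) :=
        digit_add_mul_pow_high hppos hpilt q' (σ - i)
      rw [he] at h0
      rw [h0]
      have hq'div : q' / p = n / p ^ i / p := by
        rw [hq'rep, Nat.add_mul_div_left _ _ hppos, Nat.div_eq_of_lt (by omega), Nat.zero_add]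
      obtain ⟨τ, hτ⟩ : ∃ τ, σ - i = τ + 1 := ⟨σ - i - 1, by omega⟩
      rw [hτ, ← digit_div_one, hq'div, digit_div_one, ← Nat.add_zero (τ + 1)]
      rw [show digit p (n / p ^ i) (τ + 1 + 0) = digit p n (i + (τ + 1 + 0)) from digit_div p n i _]
      have hσe : i + (τ + 1 + 0) = σ := by omega
      rw [hσe]
      exact hgtL σ (by omega)
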